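/- For all real numbers a > 0 and b > 1, one has R_{ab}(k)/k = c_{ab}(k) + O(k^{(1-a-b)/a}) as k → ∞; i.e., there exists a constant C such that |R_{ab}(k)/k - c_{ab}(k)| ≤ C k^{(1-a-b)/a} for all sufficiently large natural numbers k. -/

import Mathlib

open ArithmeticFunction

/-- The generalized Riesz function
`R_{ab}(x) = x ∑_{n=1}^∞ (μ(n)/n^b) exp(-x/n^a)`. -/
noncomputable def Rab (a b x : ℝ) : ℝ :=
  x * ∑' n : ℕ,
    ((moebius (n + 1) : ℤ) : ℝ) / ((n : ℝ) + 1) ^ b * Real.exp (-x / ((n : ℝ) + 1) ^ a)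

/-- The generalized Báez-Duarte sequence
`c_{ab}(k) = ∑_{n=1}^∞ (μ(n)/n^b)(1 - 1/n^a)^k`. -/
noncomputable def cab (a b : ℝ) (k : ℕ) : ℝ :=
  ∑' n : ℕ,
    ((moebius (n + 1) : ℤ) : ℝ) / ((n : ℝ) + 1) ^ b * (1 - 1 / ((n : ℝ) + 1) ^ a) ^ k

lemma pow_sub_pow_le_aux {x y : ℝ} (hy : 0 ≤ y) (hxy : y ≤ x) :
    ∀ k : ℕ, x ^ k - y ^ k ≤ k * x ^ (k - 1) * (x - y) := by
  intro k
  induction k with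
  | zero => simp
  | succ k ih =>
    rcases Nat.eq_zero_or_pos k with hk | hk
    · subst hk; simp
    · have hx : 0 ≤ x := hy.trans hxy
      have hyx : y ^ k ≤ x ^ k := pow_le_pow_left₀ hy hxy k
      have hxk : x * x ^ (k - 1) = x ^ k := by
        rw [← pow_succ']
        congr 1
        omega
      have h1 : x ^ (k + 1) - y ^ (k + 1) = x * (x ^ k - y ^ k) + y ^ k * (x - y) := by
        ring
      have h2 : x * (x ^ k - y ^ k) ≤ x * (k * x ^ (k - 1) * (x - y)) :=
        mul_le_mul_of_nonneg_left ih hx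
      have h3 : y ^ k * (x - y) ≤ x ^ k * (x - y) :=
        mul_le_mul_of_nonneg_right hyx (by linarith)
      have h4 : x * (k * x ^ (k - 1) * (x - y)) = k * x ^ k * (x - y) := by
        rw [← hxk]; ring
      have : ((k + 1 : ℕ) : ℝ) * x ^ ((k+1) - 1) * (x - y) = k * x ^ k * (x - y) + x ^ k * (x - y) := by
        simp only [Nat.add_sub_cancel]
        push_cast
        ring
      rw [this, h1]
      linarith

lemma exp_neg_sub_le {x : ℝ} (hx : 0 ≤ x) : Real.exp (-x) - (1 - x) ≤ x ^ 2 := by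
  have h1 : 1 + x ≤ Real.exp x := by linarith [Real.add_one_le_exp x]
  have h2 : 0 < 1 + x := by linarith
  have h3 : Real.exp (-x) ≤ 1 / (1 + x) := by
    rw [Real.exp_neg]
    rw [inv_eq_one_div]
    apply one_div_le_one_div_of_le h2 h1
  have h4 : 1 / (1 + x) - (1 - x) = x ^ 2 / (1 + x) := by
    field_simp
    ring
  have h5 : x ^ 2 / (1 + x) ≤ x ^ 2 := by
    apply div_le_self (by positivity)
    linarith
  linarith

lemma key_bound {x : ℝ} (hx0 : 0 ≤ x) (hx1 : x ≤ 1) (k : ℕ) (hk : 1 ≤ k) :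
    |Real.exp (-((k : ℝ) * x)) - (1 - x) ^ k| ≤
      (k : ℝ) * x ^ 2 * Real.exp (-(((k : ℝ) - 1) * x)) := by
  have h1 : (0:ℝ) ≤ 1 - x := by linarith
  have h2 : 1 - x ≤ Real.exp (-x) := by linarith [Real.add_one_le_exp (-x)]
  have hek : Real.exp (-x) ^ k = Real.exp (-((k:ℝ) * x)) := by
    rw [← Real.exp_nat_mul]; ring_nf
  have hpow : (1 - x) ^ k ≤ Real.exp (-((k:ℝ) * x)) := by
    rw [← hek]; exact pow_le_pow_left₀ h1 h2 k
  rw [abs_of_nonneg (by linarith)]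
  have hmain := pow_sub_pow_le_aux h1 h2 k
  have hsub : Real.exp (-x) - (1 - x) ≤ x ^ 2 := exp_neg_sub_le hx0
  have hcast : ((k - 1 : ℕ) : ℝ) = (k : ℝ) - 1 := by
    have := Nat.cast_sub hk (R := ℝ); simpa using this
  have hek1 : Real.exp (-x) ^ (k - 1) = Real.exp (-(((k:ℝ) - 1) * x)) := by
    rw [← Real.exp_nat_mul, hcast]; ring_nf
  calc Real.exp (-((k : ℝ) * x)) - (1 - x) ^ k
      ≤ (k : ℝ) * Real.exp (-x) ^ (k - 1) * (Real.exp (-x) - (1 - x)) := by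
        rw [← hek]; exact hmain
    _ ≤ (k : ℝ) * Real.exp (-(((k:ℝ) - 1) * x)) * x ^ 2 := by
        rw [hek1]
        apply mul_le_mul_of_nonneg_left hsub (by positivity)
    _ = (k : ℝ) * x ^ 2 * Real.exp (-(((k : ℝ) - 1) * x)) := by ring

lemma exp_neg_le_factorial_div {t : ℝ} (ht : 0 < t) (M : ℕ) :
    Real.exp (-t) ≤ (M.factorial : ℝ) / t ^ M := by
  have h1 : t ^ M / (M.factorial : ℝ) ≤ Real.exp t := by
    calc t ^ M / (M.factorial : ℝ) ≤ ∑ i ∈ Finset.range (M + 1), t ^ i / (i.factorial : ℝ) := by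
          exact Finset.single_le_sum (f := fun i => t ^ i / (i.factorial : ℝ))
            (fun i _ => by positivity) (Finset.self_mem_range_succ M)
      _ ≤ Real.exp t := by
          simpa using Real.sum_le_exp_of_nonneg ht.le (M + 1)
  rw [Real.exp_neg]
  rw [inv_eq_one_div, div_le_div_iff₀ (Real.exp_pos t) (by positivity)]
  rw [div_le_iff₀ (by positivity)] at h1
  calc 1 * t ^ M = t ^ M := by ring
    _ ≤ Real.exp t * (M.factorial : ℝ) := h1
    _ = (M.factorial : ℝ) * Real.exp t := by ring

lemma tail_term {y r : ℝ} (hy : 1 ≤ y) (hr : 0 < r) :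
    r * (y + 1) ^ (-(r + 1)) ≤ y ^ (-r) - (y + 1) ^ (-r) := by
  have hy0 : 0 < y := by linarith
  have hu0 : 0 < y + 1 := by linarith
  have hlog : 1 / (y + 1) ≤ Real.log ((y + 1) / y) := by
    have h := Real.log_le_sub_one_of_pos (show 0 < y / (y + 1) by positivity)
    have h2 : Real.log (y / (y + 1)) = - Real.log ((y + 1) / y) := by
      rw [← Real.log_inv]
      congr 1
      field_simp
    rw [h2] at h
    have h3 : y / (y + 1) - 1 = -(1 / (y + 1)) := by field_simp; ring
    rw [h3] at h
    linarith
  have hber : 1 + r / (y + 1) ≤ ((y + 1) / y) ^ r := by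
    have h1 : r / (y + 1) + 1 ≤ Real.exp (r / (y + 1)) := Real.add_one_le_exp _
    have h2 : Real.exp (r / (y + 1)) ≤ Real.exp (r * Real.log ((y + 1) / y)) := by
      apply Real.exp_le_exp.mpr
      calc r / (y + 1) = r * (1 / (y + 1)) := by ring
        _ ≤ r * Real.log ((y + 1) / y) := by
            apply mul_le_mul_of_nonneg_left hlog hr.le
    have h3 : Real.exp (r * Real.log ((y + 1) / y)) = ((y + 1) / y) ^ r := by
      rw [Real.rpow_def_of_pos (by positivity)]
      ring_nf
    linarith [h3 ▸ h2]
  have hkey : (y + 1) ^ (-r) * (1 + r / (y + 1)) ≤ y ^ (-r) := by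
    have h4 : (y + 1) ^ (-r) * ((y + 1) / y) ^ r = y ^ (-r) := by
      rw [Real.div_rpow hu0.le hy0.le, Real.rpow_neg hu0.le, Real.rpow_neg hy0.le]
      field_simp
    calc (y + 1) ^ (-r) * (1 + r / (y + 1)) ≤ (y + 1) ^ (-r) * ((y + 1) / y) ^ r := by
          apply mul_le_mul_of_nonneg_left hber (by positivity)
      _ = y ^ (-r) := h4
  have hexp : (y + 1) ^ (-(r + 1)) = (y + 1) ^ (-r) * (y + 1)⁻¹ := by
    rw [show -(r+1) = -r + (-1) by ring, Real.rpow_add hu0, Real.rpow_neg_one]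
  rw [hexp]
  have : r * ((y + 1) ^ (-r) * (y + 1)⁻¹) = (y + 1) ^ (-r) * (r / (y + 1)) := by
    rw [div_eq_mul_inv]; ring
  rw [this]
  have hc : r * ((y + 1) ^ (-r)) = (y + 1) ^ (-r) * r := by ring
  nlinarith [hkey, Real.rpow_pos_of_pos hu0 (-r)]

lemma tail_sum {N : ℕ} (hN : 1 ≤ N) {s : ℝ} (hs : 1 < s) :
    ∑' n : ℕ, ((n : ℝ) + N + 1) ^ (-s) ≤ (N : ℝ) ^ (1 - s) / (s - 1) := by
  have hr : 0 < s - 1 := by linarith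
  have hNpos : (0:ℝ) < N := by exact_mod_cast hN
  apply Real.tsum_le_of_sum_range_le
  · intro n; positivity
  · intro m
    set g : ℕ → ℝ := fun n => ((n : ℝ) + N) ^ (-(s - 1)) with hg
    have hterm : ∀ n : ℕ, ((n : ℝ) + N + 1) ^ (-s) ≤ (g n - g (n + 1)) / (s - 1) := by
      intro n
      have hy : 1 ≤ (n : ℝ) + N := by
        have : (1:ℝ) ≤ (N:ℝ) := by exact_mod_cast hN
        have : (0:ℝ) ≤ (n:ℝ) := Nat.cast_nonneg n
        linarith
      have := tail_term hy hr
      rw [le_div_iff₀ hr]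
      have hcast : ((n + 1 : ℕ) : ℝ) + N = (n : ℝ) + N + 1 := by push_cast; ring
      simp only [hg, hcast]
      calc ((n:ℝ) + N + 1) ^ (-s) * (s - 1) = (s - 1) * ((n:ℝ) + N + 1) ^ (-(s - 1 + 1)) := by
            ring_nf
        _ ≤ ((n:ℝ) + N) ^ (-(s-1)) - ((n:ℝ) + N + 1) ^ (-(s-1)) := by
            simpa using this
    calc ∑ n ∈ Finset.range m, ((n : ℝ) + N + 1) ^ (-s)
        ≤ ∑ n ∈ Finset.range m, (g n - g (n + 1)) / (s - 1) := by
          exact Finset.sum_le_sum (fun n _ => hterm n)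
      _ = (g 0 - g m) / (s - 1) := by
          rw [← Finset.sum_div, Finset.sum_range_sub' g]
      _ ≤ g 0 / (s - 1) := by
          have hgm : 0 ≤ g m := by
            simp only [hg]; positivity
          gcongr
          linarith
      _ = (N : ℝ) ^ (1 - s) / (s - 1) := by
          have hg0 : g 0 = (N:ℝ) ^ (1 - s) := by
            simp only [hg, Nat.cast_zero, zero_add]
            congr 1
            ring
          rw [hg0]

lemma summable_base {p : ℝ} (hp : 1 < p) :
    Summable (fun n : ℕ => (((n : ℝ) + 1) ^ p)⁻¹) := by
  have h := Real.summable_nat_rpow_inv.mpr hp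
  have h2 := (summable_nat_add_iff 1).mpr h
  apply h2.congr
  intro n
  push_cast
  ring_nf

theorem stmt11 (a b : ℝ) (ha : 0 < a) (hb : 1 < b) :
    ∃ C : ℝ, ∃ k₁ : ℕ, ∀ k : ℕ, k₁ ≤ k →
      |Rab a b k / k - cab a b k| ≤ C * (k : ℝ) ^ ((1 - a - b) / a) := by
  -- parameters
  set M : ℕ := ⌈(2 * a + b) / a⌉₊ with hMdef
  have hM : 2 * a + b ≤ a * M := by
    have h := Nat.le_ceil ((2 * a + b) / a)
    rw [div_le_iff₀ ha] at h
    linarith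
  set e1 : ℝ := a * M - 2 * a - b with he1def
  have he1 : 0 ≤ e1 := by simp only [he1def]; linarith
  set s : ℝ := b + 2 * a with hsdef
  have hs : 1 < s := by simp only [hsdef]; linarith
  set C1 : ℝ := (M.factorial : ℝ) * 2 ^ M * (2 : ℝ) ^ (e1 + 1) with hC1def
  set C2 : ℝ := 1 / (s - 1) with hC2def
  refine ⟨C1 + C2, 2, fun k hk => ?_⟩
  have hk1 : 1 ≤ k := le_trans (by norm_num) hk
  have hkR : (2 : ℝ) ≤ (k : ℝ) := by exact_mod_cast hk
  have hk0 : (0 : ℝ) < k := by linarith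
  have hkne : (k : ℝ) ≠ 0 := ne_of_gt hk0
  have hkm1 : (0 : ℝ) < (k : ℝ) - 1 := by linarith
  -- basic per-index facts
  have hy1 : ∀ n : ℕ, (1 : ℝ) ≤ (n : ℝ) + 1 := fun n => by
    have : (0:ℝ) ≤ (n:ℝ) := Nat.cast_nonneg n
    linarith
  have hy0 : ∀ n : ℕ, (0 : ℝ) < (n : ℝ) + 1 := fun n => lt_of_lt_of_le one_pos (hy1 n)
  have hya : ∀ n : ℕ, (1 : ℝ) ≤ ((n : ℝ) + 1) ^ a := fun n =>
    Real.one_le_rpow (hy1 n) ha.le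
  have hyb : ∀ n : ℕ, (1 : ℝ) ≤ ((n : ℝ) + 1) ^ b := fun n =>
    Real.one_le_rpow (hy1 n) (by linarith)
  set X : ℕ → ℝ := fun n => 1 / ((n : ℝ) + 1) ^ a with hXdef
  have hX0 : ∀ n, 0 < X n := fun n => by
    simp only [hXdef]
    positivity
  have hX1 : ∀ n, X n ≤ 1 := fun n => by
    simp only [hXdef]
    rw [div_le_one (by positivity)]
    exact hya n
  -- the summands
  set F : ℕ → ℝ := fun n =>
    ((moebius (n + 1) : ℤ) : ℝ) / ((n : ℝ) + 1) ^ b * Real.exp (-(k:ℝ) / ((n : ℝ) + 1) ^ a)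
    with hFdef
  set G : ℕ → ℝ := fun n =>
    ((moebius (n + 1) : ℤ) : ℝ) / ((n : ℝ) + 1) ^ b * (1 - 1 / ((n : ℝ) + 1) ^ a) ^ k
    with hGdef
  have hmu : ∀ n : ℕ, |((moebius (n + 1) : ℤ) : ℝ)| ≤ 1 := fun n => by
    have := abs_moebius_le_one (n := n + 1)
    exact_mod_cast this
  -- the dominating sequence
  set B : ℕ → ℝ := fun n =>
    (k : ℝ) * (((n : ℝ) + 1) ^ b)⁻¹ * X n ^ 2 * Real.exp (-(((k:ℝ) - 1) * X n)) with hBdef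
  have hB0 : ∀ n, 0 ≤ B n := fun n => by
    simp only [hBdef]
    have := (hX0 n).le
    positivity
  -- B is summable
  have hBle : ∀ n, B n ≤ (k : ℝ) * (((n : ℝ) + 1) ^ b)⁻¹ := fun n => by
    simp only [hBdef]
    have h1 : Real.exp (-(((k:ℝ) - 1) * X n)) ≤ 1 := by
      rw [Real.exp_le_one_iff]
      exact neg_nonpos.mpr (mul_nonneg (by linarith) (hX0 n).le)
    have h2 : X n ^ 2 ≤ 1 := by
      have := (hX0 n).le
      nlinarith [hX1 n]
    calc (k : ℝ) * (((n : ℝ) + 1) ^ b)⁻¹ * X n ^ 2 * Real.exp (-(((k:ℝ) - 1) * X n))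
        ≤ (k : ℝ) * (((n : ℝ) + 1) ^ b)⁻¹ * X n ^ 2 * 1 := by
          apply mul_le_mul_of_nonneg_left h1
          have := (hX0 n).le
          positivity
      _ = (k : ℝ) * (((n : ℝ) + 1) ^ b)⁻¹ * X n ^ 2 := by ring
      _ ≤ (k : ℝ) * (((n : ℝ) + 1) ^ b)⁻¹ * 1 :=
          mul_le_mul_of_nonneg_left h2 (by positivity)
      _ = (k : ℝ) * (((n : ℝ) + 1) ^ b)⁻¹ := by ring
  have hBsum : Summable B := by
    apply Summable.of_nonneg_of_le hB0 hBle
    exact (summable_base hb).mul_left _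
  -- summability of F and G
  have habsF : ∀ n, |F n| ≤ (((n : ℝ) + 1) ^ b)⁻¹ := fun n => by
    simp only [hFdef, abs_mul, abs_div]
    have h1 : |Real.exp (-(k:ℝ) / ((n : ℝ) + 1) ^ a)| ≤ 1 := by
      rw [abs_of_pos (Real.exp_pos _), Real.exp_le_one_iff]
      apply div_nonpos_of_nonpos_of_nonneg (by linarith) (by positivity)
    have h2 : |((moebius (n + 1) : ℤ) : ℝ)| / |((n : ℝ) + 1) ^ b| ≤ (((n : ℝ) + 1) ^ b)⁻¹ := by
      rw [abs_of_pos (Real.rpow_pos_of_pos (hy0 n) b)]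
      rw [div_le_iff₀ (Real.rpow_pos_of_pos (hy0 n) b), inv_mul_cancel₀
        (ne_of_gt (Real.rpow_pos_of_pos (hy0 n) b))]
      exact hmu n
    calc |((moebius (n + 1) : ℤ) : ℝ)| / |((n : ℝ) + 1) ^ b| * |Real.exp (-(k:ℝ) / ((n : ℝ) + 1) ^ a)|
        ≤ (((n : ℝ) + 1) ^ b)⁻¹ * 1 :=
          mul_le_mul h2 h1 (abs_nonneg _) (by positivity)
      _ = (((n : ℝ) + 1) ^ b)⁻¹ := by ring
  have habsG : ∀ n, |G n| ≤ (((n : ℝ) + 1) ^ b)⁻¹ := fun n => by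
    simp only [hGdef, abs_mul, abs_div]
    have hx0 := hX0 n
    have hx1 := hX1 n
    have h1 : |(1 - 1 / ((n : ℝ) + 1) ^ a) ^ k| ≤ 1 := by
      rw [abs_pow]
      apply pow_le_one₀ (abs_nonneg _)
      rw [abs_le]
      constructor
      · simp only [hXdef] at hx1
        linarith
      · simp only [hXdef] at hx0
        linarith
    have h2 : |((moebius (n + 1) : ℤ) : ℝ)| / |((n : ℝ) + 1) ^ b| ≤ (((n : ℝ) + 1) ^ b)⁻¹ := by
      rw [abs_of_pos (Real.rpow_pos_of_pos (hy0 n) b)]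
      rw [div_le_iff₀ (Real.rpow_pos_of_pos (hy0 n) b), inv_mul_cancel₀
        (ne_of_gt (Real.rpow_pos_of_pos (hy0 n) b))]
      exact hmu n
    calc |((moebius (n + 1) : ℤ) : ℝ)| / |((n : ℝ) + 1) ^ b| * |(1 - 1 / ((n : ℝ) + 1) ^ a) ^ k|
        ≤ (((n : ℝ) + 1) ^ b)⁻¹ * 1 :=
          mul_le_mul h2 h1 (abs_nonneg _) (by positivity)
      _ = (((n : ℝ) + 1) ^ b)⁻¹ := by ring
  have hFsum : Summable F := by
    apply Summable.of_norm_bounded (summable_base hb)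
    intro n
    rw [Real.norm_eq_abs]
    exact habsF n
  have hGsum : Summable G := by
    apply Summable.of_norm_bounded (summable_base hb)
    intro n
    rw [Real.norm_eq_abs]
    exact habsG n
  -- pointwise bound on the difference
  have hFG : ∀ n, |F n - G n| ≤ B n := by
    intro n
    have hE : Real.exp (-(k:ℝ) / ((n : ℝ) + 1) ^ a) = Real.exp (-((k:ℝ) * X n)) := by
      congr 1
      simp only [hXdef]
      rw [neg_div, div_eq_mul_one_div]
    have hdiff : F n - G n =
        ((moebius (n + 1) : ℤ) : ℝ) / ((n : ℝ) + 1) ^ b *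
          (Real.exp (-((k:ℝ) * X n)) - (1 - X n) ^ k) := by
      simp only [hFdef, hGdef, hXdef, ← hE]
      ring
    rw [hdiff, abs_mul, abs_div]
    have h2 : |((moebius (n + 1) : ℤ) : ℝ)| / |((n : ℝ) + 1) ^ b| ≤ (((n : ℝ) + 1) ^ b)⁻¹ := by
      rw [abs_of_pos (Real.rpow_pos_of_pos (hy0 n) b)]
      rw [div_le_iff₀ (Real.rpow_pos_of_pos (hy0 n) b), inv_mul_cancel₀
        (ne_of_gt (Real.rpow_pos_of_pos (hy0 n) b))]
      exact hmu n
    have h3 := key_bound (hX0 n).le (hX1 n) k hk1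
    calc |((moebius (n + 1) : ℤ) : ℝ)| / |((n : ℝ) + 1) ^ b| *
          |Real.exp (-((k:ℝ) * X n)) - (1 - X n) ^ k|
        ≤ (((n : ℝ) + 1) ^ b)⁻¹ * ((k : ℝ) * X n ^ 2 * Real.exp (-(((k:ℝ) - 1) * X n))) :=
          mul_le_mul h2 h3 (abs_nonneg _) (by positivity)
      _ = B n := by simp only [hBdef]; ring
  have hFGsum : Summable (fun n => |F n - G n|) :=
    Summable.of_nonneg_of_le (fun n => abs_nonneg _) hFG hBsum
  -- the global error bound
  have hstep1 : |Rab a b k / k - cab a b k| ≤ ∑' n, B n := by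
    have hR : Rab a b k / k = ∑' n, F n := by
      rw [Rab]
      rw [mul_div_cancel_left₀ _ hkne]
    have hc : cab a b k = ∑' n, G n := rfl
    rw [hR, hc, ← Summable.tsum_sub hFsum hGsum]
    calc |∑' n, (F n - G n)| ≤ ∑' n, |F n - G n| := by
          have := norm_tsum_le_tsum_norm (f := fun n => F n - G n) (by
            simpa only [Real.norm_eq_abs] using hFGsum)
          simpa only [Real.norm_eq_abs] using this
      _ ≤ ∑' n, B n := Summable.tsum_le_tsum hFG hFGsum hBsum
  -- split point
  set N : ℕ := ⌈(k : ℝ) ^ (1 / a)⌉₊ with hNdef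
  have hz1 : (1 : ℝ) ≤ (k : ℝ) ^ (1 / a) := Real.one_le_rpow (by linarith) (by positivity)
  have hzpos : (0 : ℝ) < (k : ℝ) ^ (1 / a) := by linarith
  have hN1 : 1 ≤ N := Nat.one_le_ceil_iff.mpr hzpos
  have hNz : (k : ℝ) ^ (1 / a) ≤ (N : ℝ) := Nat.le_ceil _
  have hN2 : (N : ℝ) ≤ 2 * (k : ℝ) ^ (1 / a) := by
    have := Nat.ceil_lt_add_one hzpos.le (R := ℝ)
    simp only [hNdef]
    linarith
  have hNpos : (0 : ℝ) < (N : ℝ) := by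
    have : (1:ℝ) ≤ (N:ℝ) := by exact_mod_cast hN1
    linarith
  -- head bound
  set c : ℝ := (M.factorial : ℝ) * (k : ℝ) / ((k : ℝ) - 1) ^ M with hcdef
  have hc0 : 0 ≤ c := by
    simp only [hcdef]
    positivity
  have hhead : ∑ n ∈ Finset.range N, B n ≤ C1 * (k : ℝ) ^ ((1 - a - b) / a) := by
    have hterm : ∀ n : ℕ, B n ≤ c * ((n : ℝ) + 1) ^ e1 := by
      intro n
      have hyp := hy0 n
      have ht : 0 < ((k:ℝ) - 1) * X n := mul_pos hkm1 (hX0 n)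
      have hexp := exp_neg_le_factorial_div ht M
      have hXr : X n = ((n:ℝ) + 1) ^ (-a) := by
        simp only [hXdef]
        rw [one_div, ← Real.rpow_neg hyp.le]
      have hX2 : X n ^ 2 = ((n:ℝ) + 1) ^ (-(a * 2)) := by
        rw [hXr, ← Real.rpow_natCast (((n:ℝ) + 1) ^ (-a)) 2, ← Real.rpow_mul hyp.le]
        norm_num
      have hXM : X n ^ M = ((n:ℝ) + 1) ^ (-(a * M)) := by
        rw [hXr, ← Real.rpow_natCast (((n:ℝ) + 1) ^ (-a)) M, ← Real.rpow_mul hyp.le]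
        ring_nf
      have hybi : (((n:ℝ) + 1) ^ b)⁻¹ = ((n:ℝ) + 1) ^ (-b) := by
        rw [← Real.rpow_neg hyp.le]
      have hcollect : ((n:ℝ)+1) ^ (-b) * ((n:ℝ)+1) ^ (-(a*2)) / ((n:ℝ)+1) ^ (-(a*M))
          = ((n:ℝ)+1) ^ e1 := by
        rw [← Real.rpow_add hyp, ← Real.rpow_sub hyp]
        congr 1
        simp only [he1def]
        ring
      have hkM : (0:ℝ) < ((k:ℝ) - 1) ^ M := by positivity
      have hXMpos : (0:ℝ) < X n ^ M := by positivity
      calc B n = (k : ℝ) * (((n : ℝ) + 1) ^ b)⁻¹ * X n ^ 2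
            * Real.exp (-(((k:ℝ) - 1) * X n)) := rfl
        _ ≤ (k : ℝ) * (((n : ℝ) + 1) ^ b)⁻¹ * X n ^ 2
            * ((M.factorial : ℝ) / (((k:ℝ) - 1) * X n) ^ M) := by
            apply mul_le_mul_of_nonneg_left hexp
            have := (hX0 n).le
            positivity
        _ = c * ((((n:ℝ)+1) ^ b)⁻¹ * X n ^ 2 / X n ^ M) := by
            rw [mul_pow]
            simp only [hcdef]
            field_simp
        _ = c * (((n:ℝ)+1) ^ (-b) * ((n:ℝ)+1) ^ (-(a*2)) / ((n:ℝ)+1) ^ (-(a*M))) := by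
            rw [hybi, hX2, hXM]
        _ = c * ((n:ℝ)+1) ^ e1 := by rw [hcollect]
    have hsumhead : ∑ n ∈ Finset.range N, B n ≤ c * ((N:ℝ) * (N:ℝ) ^ e1) := by
      calc ∑ n ∈ Finset.range N, B n ≤ ∑ n ∈ Finset.range N, c * ((n : ℝ) + 1) ^ e1 :=
            Finset.sum_le_sum (fun n _ => hterm n)
        _ ≤ ∑ n ∈ Finset.range N, c * (N:ℝ) ^ e1 := by
            apply Finset.sum_le_sum
            intro n hn
            apply mul_le_mul_of_nonneg_left _ hc0
            apply Real.rpow_le_rpow (hy0 n).le _ he1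
            have : n + 1 ≤ N := Finset.mem_range.mp hn
            exact_mod_cast this
        _ = (N:ℕ) • (c * (N:ℝ) ^ e1) := by
            rw [Finset.sum_const, Finset.card_range]
        _ = c * ((N:ℝ) * (N:ℝ) ^ e1) := by
            rw [nsmul_eq_mul]
            ring
    -- now convert to powers of k
    have hNe1 : (N:ℝ) * (N:ℝ) ^ e1 = (N:ℝ) ^ (e1 + 1) := by
      rw [Real.rpow_add hNpos, Real.rpow_one]
      ring
    have hNle : (N:ℝ) ^ (e1 + 1) ≤ (2:ℝ) ^ (e1 + 1) * (k:ℝ) ^ ((e1 + 1) / a) := by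
      calc (N:ℝ) ^ (e1 + 1) ≤ (2 * (k:ℝ) ^ (1/a)) ^ (e1 + 1) :=
            Real.rpow_le_rpow hNpos.le hN2 (by linarith)
        _ = (2:ℝ) ^ (e1 + 1) * ((k:ℝ) ^ (1/a)) ^ (e1 + 1) := by
            rw [Real.mul_rpow (by norm_num) hzpos.le]
        _ = (2:ℝ) ^ (e1 + 1) * (k:ℝ) ^ ((e1 + 1) / a) := by
            rw [← Real.rpow_mul hk0.le]
            congr 1
            ring
    have hcle : c ≤ (M.factorial : ℝ) * 2 ^ M * ((k:ℝ) * ((k:ℝ) ^ M)⁻¹) := by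
      simp only [hcdef]
      have h1 : ((k:ℝ) / 2) ^ M ≤ ((k:ℝ) - 1) ^ M := by
        apply pow_le_pow_left₀ (by linarith) (by linarith)
      have h2 : (((k:ℝ) - 1) ^ M)⁻¹ ≤ (((k:ℝ) / 2) ^ M)⁻¹ := by
        apply inv_anti₀ (by positivity) h1
      have h3 : (((k:ℝ) / 2) ^ M)⁻¹ = 2 ^ M * ((k:ℝ) ^ M)⁻¹ := by
        rw [div_pow]
        rw [inv_div]
        ring
      calc (M.factorial : ℝ) * (k:ℝ) / ((k:ℝ) - 1) ^ M
          = (M.factorial : ℝ) * (k:ℝ) * (((k:ℝ) - 1) ^ M)⁻¹ := by ring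
        _ ≤ (M.factorial : ℝ) * (k:ℝ) * (((k:ℝ) / 2) ^ M)⁻¹ := by
            apply mul_le_mul_of_nonneg_left h2 (by positivity)
        _ = (M.factorial : ℝ) * 2 ^ M * ((k:ℝ) * ((k:ℝ) ^ M)⁻¹) := by
            rw [h3]
            ring
    have hkpow : (k:ℝ) * ((k:ℝ) ^ M)⁻¹ * (k:ℝ) ^ ((e1 + 1) / a) = (k:ℝ) ^ ((1 - a - b) / a) := by
      have h1 : (k:ℝ) = (k:ℝ) ^ (1:ℝ) := (Real.rpow_one _).symm
      have h2 : ((k:ℝ) ^ M)⁻¹ = (k:ℝ) ^ (-(M:ℝ)) := by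
        rw [Real.rpow_neg hk0.le, Real.rpow_natCast]
      rw [h2]
      nth_rewrite 1 [h1]
      rw [← Real.rpow_add hk0, ← Real.rpow_add hk0]
      congr 1
      simp only [he1def]
      field_simp
      ring
    calc ∑ n ∈ Finset.range N, B n ≤ c * ((N:ℝ) * (N:ℝ) ^ e1) := hsumhead
      _ = c * (N:ℝ) ^ (e1 + 1) := by rw [hNe1]
      _ ≤ ((M.factorial : ℝ) * 2 ^ M * ((k:ℝ) * ((k:ℝ) ^ M)⁻¹)) *
            ((2:ℝ) ^ (e1 + 1) * (k:ℝ) ^ ((e1 + 1) / a)) := by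
          apply mul_le_mul hcle hNle (by positivity) (by positivity)
      _ = C1 * ((k:ℝ) * ((k:ℝ) ^ M)⁻¹ * (k:ℝ) ^ ((e1 + 1) / a)) := by
          simp only [hC1def]
          ring
      _ = C1 * (k : ℝ) ^ ((1 - a - b) / a) := by rw [hkpow]
  -- tail bound
  have htail : ∑' n : ℕ, B (n + N) ≤ C2 * (k : ℝ) ^ ((1 - a - b) / a) := by
    have hterm : ∀ n : ℕ, B (n + N) ≤ (k:ℝ) * ((n : ℝ) + N + 1) ^ (-s) := by
      intro n
      have hyp := hy0 (n + N)
      have hcast : ((n + N : ℕ) : ℝ) + 1 = (n : ℝ) + N + 1 := by push_cast; ring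
      have hXr : X (n + N) = (((n + N : ℕ) : ℝ) + 1) ^ (-a) := by
        simp only [hXdef]
        rw [one_div, ← Real.rpow_neg hyp.le]
      have hX2 : X (n + N) ^ 2 = (((n + N : ℕ) : ℝ) + 1) ^ (-(a * 2)) := by
        rw [hXr, ← Real.rpow_natCast ((((n + N : ℕ) : ℝ) + 1) ^ (-a)) 2,
          ← Real.rpow_mul hyp.le]
        norm_num
      have hybi : ((((n + N : ℕ) : ℝ) + 1) ^ b)⁻¹ = (((n + N : ℕ) : ℝ) + 1) ^ (-b) := by
        rw [← Real.rpow_neg hyp.le]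
      have hE1 : Real.exp (-(((k:ℝ) - 1) * X (n + N))) ≤ 1 := by
        rw [Real.exp_le_one_iff]
        exact neg_nonpos.mpr (mul_nonneg (by linarith) (hX0 (n + N)).le)
      have hcoll : (((n + N : ℕ) : ℝ) + 1) ^ (-b) * (((n + N : ℕ) : ℝ) + 1) ^ (-(a * 2))
          = (((n + N : ℕ) : ℝ) + 1) ^ (-s) := by
        rw [← Real.rpow_add hyp]
        congr 1
        simp only [hsdef]
        ring
      calc B (n + N) = (k : ℝ) * ((((n + N : ℕ) : ℝ) + 1) ^ b)⁻¹ * X (n + N) ^ 2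
            * Real.exp (-(((k:ℝ) - 1) * X (n + N))) := rfl
        _ ≤ (k : ℝ) * ((((n + N : ℕ) : ℝ) + 1) ^ b)⁻¹ * X (n + N) ^ 2 * 1 := by
            apply mul_le_mul_of_nonneg_left hE1
            have := (hX0 (n + N)).le
            positivity
        _ = (k : ℝ) * ((((n + N : ℕ) : ℝ) + 1) ^ (-b) * (((n + N : ℕ) : ℝ) + 1) ^ (-(a * 2))) := by
            rw [hybi, hX2]
            ring
        _ = (k : ℝ) * (((n + N : ℕ) : ℝ) + 1) ^ (-s) := by rw [hcoll]
        _ = (k:ℝ) * ((n : ℝ) + N + 1) ^ (-s) := by rw [hcast]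
    have hsumR : Summable (fun n : ℕ => (k:ℝ) * ((n : ℝ) + N + 1) ^ (-s)) := by
      apply Summable.mul_left
      have h1 : Summable (fun n : ℕ => (((n : ℝ) + 1) ^ s)⁻¹) := summable_base hs
      have h2 := (summable_nat_add_iff N).mpr h1
      apply h2.congr
      intro n
      have hyp := hy0 (n + N)
      have hcast : ((n + N : ℕ) : ℝ) + 1 = (n : ℝ) + N + 1 := by push_cast; ring
      rw [← hcast, ← Real.rpow_neg hyp.le]
    have hBsumN : Summable (fun n : ℕ => B (n + N)) := (summable_nat_add_iff N).mpr hBsum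
    have hzb : (N : ℝ) ^ (1 - s) ≤ (k : ℝ) ^ ((1 - s) / a) := by
      calc (N : ℝ) ^ (1 - s) ≤ ((k : ℝ) ^ (1/a)) ^ (1 - s) :=
            Real.rpow_le_rpow_of_nonpos hzpos hNz (by linarith)
        _ = (k : ℝ) ^ ((1 - s) / a) := by
            rw [← Real.rpow_mul hk0.le]
            congr 1
            ring
    have hkpow2 : (k:ℝ) * (k:ℝ) ^ ((1 - s) / a) = (k:ℝ) ^ ((1 - a - b) / a) := by
      nth_rewrite 1 [(Real.rpow_one (k:ℝ)).symm]
      rw [← Real.rpow_add hk0]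
      congr 1
      simp only [hsdef]
      field_simp
      ring
    calc ∑' n : ℕ, B (n + N) ≤ ∑' n : ℕ, (k:ℝ) * ((n : ℝ) + N + 1) ^ (-s) :=
          Summable.tsum_le_tsum hterm hBsumN hsumR
      _ = (k:ℝ) * ∑' n : ℕ, ((n : ℝ) + N + 1) ^ (-s) := tsum_mul_left
      _ ≤ (k:ℝ) * ((N : ℝ) ^ (1 - s) / (s - 1)) := by
          apply mul_le_mul_of_nonneg_left (tail_sum hN1 hs) hk0.le
      _ ≤ (k:ℝ) * ((k : ℝ) ^ ((1 - s) / a) / (s - 1)) := by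
          apply mul_le_mul_of_nonneg_left _ hk0.le
          apply div_le_div_of_nonneg_right hzb (by linarith) |>.trans_eq rfl
      _ = C2 * ((k:ℝ) * (k:ℝ) ^ ((1 - s) / a)) := by
          simp only [hC2def]
          ring
      _ = C2 * (k : ℝ) ^ ((1 - a - b) / a) := by rw [hkpow2]
  calc |Rab a b k / k - cab a b k| ≤ ∑' n, B n := hstep1
    _ = ∑ n ∈ Finset.range N, B n + ∑' n : ℕ, B (n + N) := (Summable.sum_add_tsum_nat_add N hBsum).symm
    _ ≤ C1 * (k : ℝ) ^ ((1 - a - b) / a) + C2 * (k : ℝ) ^ ((1 - a - b) / a) := by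
        exact add_le_add hhead htail
    _ = (C1 + C2) * (k : ℝ) ^ ((1 - a - b) / a) := by ring
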